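/- Folding preserves confluence of central-firing: let Φ be a simply laced root system with Dynkin diagram automorphism σ (no vertex adjacent to its image), and let Φ' be the folded root system with simple roots α_J = ∑_{i∈J} αᵢ over σ-orbits J. If central-firing for Φ is confluent from a σ-invariant weight λ ∈ P^σ, then central-firing for Φ' is confluent from λ. -/

import Mathlib

open scoped RealInnerProductSpace

noncomputable section

namespace CF

variable {V : Type*} [NormedAddCommGroup V] [InnerProductSpace ℝ V]

/-- The coroot `α∨ = 2α/⟨α,α⟩`. -/
def coroot (α : V) : V := (2 / ⟪α, α⟫) • α

/-- A reduced crystallographic root system in `V`. -/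
def IsRootSystem (Φ : Set V) : Prop :=
  Φ.Finite ∧ (0 : V) ∉ Φ ∧ Submodule.span ℝ Φ = ⊤ ∧
    (∀ α ∈ Φ, ∀ β ∈ Φ, β - ⟪β, coroot α⟫ • α ∈ Φ) ∧
    (∀ α ∈ Φ, ∀ t : ℝ, t • α ∈ Φ → t = 1 ∨ t = -1) ∧
    (∀ α ∈ Φ, ∀ β ∈ Φ, ∃ n : ℤ, ⟪β, coroot α⟫ = (n : ℝ))

/-- A choice of positive roots `Φ⁺ ⊆ Φ` (exactly one of `±α` is positive, and the positive
roots lie strictly on one side of a hyperplane). -/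
def IsPositiveSystem (Φ Φp : Set V) : Prop :=
  Φp ⊆ Φ ∧ (∀ α ∈ Φ, (α ∈ Φp ∨ -α ∈ Φp) ∧ ¬(α ∈ Φp ∧ -α ∈ Φp)) ∧
    ∃ ℓ : V →ₗ[ℝ] ℝ, ∀ α ∈ Φp, 0 < ℓ α

/-- The weight lattice `P = {v : ⟨v, α∨⟩ ∈ ℤ for all α ∈ Φ}`. -/
def weightLattice (Φ : Set V) : Set V :=
  {v | ∀ α ∈ Φ, ∃ n : ℤ, ⟪v, coroot α⟫ = (n : ℝ)}

/-- Central-firing: `λ → λ + α` whenever `α ∈ Φ⁺` and `⟨λ, α∨⟩ = 0`. -/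
def fire (Φp : Set V) (lam mu : V) : Prop :=
  ∃ α ∈ Φp, ⟪lam, coroot α⟫ = 0 ∧ mu = lam + α

/-- The Weyl group: the group of linear isometries generated by the reflections `s_α`, `α ∈ Φ`. -/
def weylGroup (Φ : Set V) : Subgroup (V ≃ₗᵢ[ℝ] V) :=
  Subgroup.closure {g | ∃ α ∈ Φ, ∀ v, g v = v - ⟪v, coroot α⟫ • α}

/-- `v` and `w` lie in the same Weyl group orbit. -/
def sameOrbit (Φ : Set V) (v w : V) : Prop := ∃ g ∈ weylGroup Φ, g v = w

def weylOrbit (Φ : Set V) (v : V) : Set V := {w | sameOrbit Φ v w}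

/-- The root lattice `Q`. -/
def rootLattice (Φ : Set V) : AddSubgroup V := AddSubgroup.closure Φ

/-- `Π^Q(λ)`: the points of the permutohedron `Π(λ) = ConvexHull(Wλ)` lying in `λ + Q`. -/
def permQ (Φ : Set V) (lam : V) : Set V :=
  {mu | mu ∈ convexHull ℝ (weylOrbit Φ lam) ∧ lam - mu ∈ rootLattice Φ}

def IsDominant (Δ : Set V) (lam : V) : Prop := ∀ a ∈ Δ, 0 ≤ ⟪lam, coroot a⟫

def IsStrictlyDominant (Δ : Set V) (lam : V) : Prop := ∀ a ∈ Δ, 0 < ⟪lam, coroot a⟫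

/-- A minuscule weight: a nonzero dominant weight whose `Π^Q` consists of its Weyl orbit. -/
def IsMinuscule (Φ Δ : Set V) (w : V) : Prop :=
  w ≠ 0 ∧ IsDominant Δ w ∧ ∀ mu ∈ permQ Φ w, sameOrbit Φ w mu

/-- `Δ` is a system of simple roots for the positive system `Φ⁺`. -/
def IsSimpleSystem (Φp : Set V) (Δ : Finset V) : Prop :=
  (Δ : Set V) ⊆ Φp ∧ LinearIndependent ℝ (fun a : (Δ : Set V) => (a : V)) ∧
    ∀ α ∈ Φp, ∃ c : V → ℝ, (∀ a ∈ Δ, 0 ≤ c a) ∧ α = ∑ a ∈ Δ, c a • a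

def IsSimplyLaced (Φ : Set V) : Prop := ∀ α ∈ Φ, ∀ β ∈ Φ, ⟪α, α⟫ = ⟪β, β⟫

/-- Irreducibility: `Φ` cannot be split into two nonempty mutually orthogonal parts. -/
def IsIrreducibleRS (Φ : Set V) : Prop :=
  ¬ ∃ S T : Set V, S.Nonempty ∧ T.Nonempty ∧ S ∪ T = Φ ∧ ∀ a ∈ S, ∀ b ∈ T, ⟪a, b⟫ = 0

/-- The firing span `FS_S(λ) = Span_ℝ{μ − λ : λ →* μ}`. -/
def firingSpan (Φp : Set V) (lam : V) : Submodule ℝ V :=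
  Submodule.span ℝ {d | ∃ mu, Relation.ReflTransGen (fire Φp) lam mu ∧ d = mu - lam}

/-- Central-firing on Weyl orbits: `Wλ → Wμ` iff some representatives fire. -/
def ofire (Φ Φp : Set V) (lam mu : V) : Prop :=
  ∃ lam' mu', sameOrbit Φ lam lam' ∧ sameOrbit Φ mu mu' ∧ fire Φp lam' mu'

/-- Connectivity of roots within a subset `Ψ` (via non-orthogonality). -/
def sameComponent (Ψ : Set V) (β γ : V) : Prop :=
  Relation.ReflTransGen (fun x y => x ∈ Ψ ∧ y ∈ Ψ ∧ ⟪x, y⟫ ≠ 0) β γ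

/-- Confluence of central-firing from `λ`: all maximal firing sequences from `λ`
terminate at the same weight. -/
def ConfluentFrom (S : Set V) (lam : V) : Prop :=
  ∀ mu₁ mu₂ : V, Relation.ReflTransGen (fire S) lam mu₁ → (¬ ∃ ν, fire S mu₁ ν) →
    Relation.ReflTransGen (fire S) lam mu₂ → (¬ ∃ ν, fire S mu₂ ν) → mu₁ = mu₂

/-- `β` is a positive root of the folded root system: the sum of a `σ`-orbit `B` of
pairwise orthogonal positive roots of `Φ`. -/
def IsFoldedPosRoot (σ : V ≃ₗᵢ[ℝ] V) (Φp : Set V) (β : V) : Prop :=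
  ∃ B : Finset V, (B : Set V) ⊆ Φp ∧ B.Nonempty ∧
    (∀ γ ∈ B, σ γ ∈ B) ∧
    (∀ γ ∈ B, ∀ δ ∈ B, ∃ k : ℕ, (fun v => σ v)^[k] γ = δ) ∧
    (∀ γ ∈ B, ∀ δ ∈ B, γ ≠ δ → ⟪γ, δ⟫ = 0) ∧
    β = ∑ γ ∈ B, γ

section FoldingAux

lemma iter_mem (σ : V ≃ₗᵢ[ℝ] V) {S : Set V} (h : ∀ α ∈ S, σ α ∈ S) :
    ∀ (k : ℕ) {α : V}, α ∈ S → (fun v => σ v)^[k] α ∈ S := by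
  intro k
  induction k with
  | zero => intro α hα; simpa using hα
  | succ n ih =>
    intro α hα
    rw [Function.iterate_succ_apply]
    exact ih (h α hα)

lemma iter_fix (σ : V ≃ₗᵢ[ℝ] V) {v : V} (h : σ v = v) (k : ℕ) :
    (fun v => σ v)^[k] v = v := by
  induction k with
  | zero => simp
  | succ n ih => rw [Function.iterate_succ_apply, h, ih]

lemma iter_inner (σ : V ≃ₗᵢ[ℝ] V) (k : ℕ) (x y : V) :
    ⟪(fun v => σ v)^[k] x, (fun v => σ v)^[k] y⟫ = ⟪x, y⟫ := by
  induction k with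
  | zero => simp
  | succ n ih =>
    rw [Function.iterate_succ_apply', Function.iterate_succ_apply']
    exact (σ.inner_map_map _ _).trans ih

lemma inner_coroot_eq (α v : V) : ⟪v, coroot α⟫ = (2 / ⟪α, α⟫) * ⟪v, α⟫ := by
  simp [coroot, real_inner_smul_right]

end FoldingAux

set_option maxHeartbeats 1000000 in
/-- folding preserves confluence of central-firing.  If `σ` is a Dynkin diagram
automorphism of the simply laced `Φ` with no vertex adjacent to a vertex of its orbit, and
central-firing for `Φ` is confluent from the `σ`-invariant weight `λ`, then central-firing
for the folded system `Φ'` is confluent from `λ`. -/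
theorem folding_confluence (Φ Φp Δ : Finset V)
    (hΦ : IsRootSystem (Φ : Set V)) (hp : IsPositiveSystem (Φ : Set V) (Φp : Set V))
    (hΔ : IsSimpleSystem (Φp : Set V) Δ) (hsl : IsSimplyLaced (Φ : Set V))
    (σ : V ≃ₗᵢ[ℝ] V)
    (hσΦ : ∀ α ∈ Φ, σ α ∈ Φ) (hσp : ∀ α ∈ Φp, σ α ∈ Φp) (hσΔ : ∀ a ∈ Δ, σ a ∈ Δ)
    (hadj : ∀ a ∈ Δ, ∀ k : ℕ, (fun v => σ v)^[k] a ≠ a → ⟪a, (fun v => σ v)^[k] a⟫ = 0)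
    (lam : V) (hlam : lam ∈ weightLattice (Φ : Set V)) (hσlam : σ lam = lam)
    (hconf : ConfluentFrom (Φp : Set V) lam) :
    ConfluentFrom {β | IsFoldedPosRoot σ (Φp : Set V) β} lam := by
  classical
  obtain ⟨hΦfin, hΦ0, hΦspan, hΦrefl, hΦred, hΦcrys⟩ := hΦ
  obtain ⟨hsub, hpm, ℓ, hℓ⟩ := hp
  -- σ has finite order r
  obtain ⟨r, hr0, hrid⟩ : ∃ r : ℕ, 0 < r ∧ ∀ v : V, (fun v => σ v)^[r] v = v := by
    haveI : Fintype {x // x ∈ Φ} := FinsetCoe.fintype Φ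
    set f : {x // x ∈ Φ} → {x // x ∈ Φ} := fun x => ⟨σ x, hσΦ x x.2⟩ with hf
    have hfinj : Function.Injective f := by
      intro a b hab
      exact Subtype.ext (σ.injective (congrArg Subtype.val hab))
    set e : Equiv.Perm {x // x ∈ Φ} := Equiv.ofBijective f
      (Finite.injective_iff_bijective.mp hfinj) with he
    have hek : ∀ (k : ℕ) (x : {x // x ∈ Φ}), ((e ^ k) x : V) = (fun v => σ v)^[k] (x : V) := by
      intro k
      induction k with
      | zero => intro x; simp
      | succ n ih =>
        intro x
        have h1 : (e ^ (n + 1)) x = (e ^ n) (e x) := by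
          rw [pow_succ]; rfl
        have h2 : ((e x : {x // x ∈ Φ}) : V) = σ (x : V) := rfl
        rw [h1, ih (e x), h2, ← Function.iterate_succ_apply]
    have hΦfix : ∀ α ∈ Φ, (fun v => σ v)^[orderOf e] α = α := by
      intro α hα
      have h1 := congrArg (fun g : Equiv.Perm {x // x ∈ Φ} => ((g ⟨α, hα⟩ : {x // x ∈ Φ}) : V))
        (pow_orderOf_eq_one e)
      have h2 := hek (orderOf e) ⟨α, hα⟩
      rw [pow_orderOf_eq_one] at h2
      simpa using h2.symm
    set sL : V →ₗ[ℝ] V := (σ.toLinearEquiv : V →ₗ[ℝ] V) with hsL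
    have hsLit : ∀ (k : ℕ) (v : V), (sL ^ k) v = (fun v => σ v)^[k] v := by
      intro k v
      rw [Module.End.pow_apply]
      rfl
    have hpow : sL ^ (orderOf e) = LinearMap.id := by
      apply LinearMap.ext_on hΦspan
      intro x hx
      rw [hsLit]
      simpa using hΦfix x hx
    refine ⟨orderOf e, orderOf_pos e, fun v => ?_⟩
    have := congrArg (fun g : V →ₗ[ℝ] V => g v) hpow
    simpa [hsLit] using this
  -- basic facts
  have hpos0 : ∀ {α : V}, α ∈ (Φ : Set V) → 0 < ⟪α, α⟫ := by
    intro α hα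
    refine lt_of_le_of_ne real_inner_self_nonneg (fun he => ?_)
    exact hΦ0 (by rwa [inner_self_eq_zero.mp he.symm] at hα)
  have hco0 : ∀ {α : V}, α ∈ (Φ : Set V) → ∀ v : V, ⟪v, coroot α⟫ = 0 ↔ ⟪v, α⟫ = 0 := by
    intro α hα v
    rw [inner_coroot_eq]
    constructor
    · intro h
      rcases mul_eq_zero.mp h with h | h
      · exact absurd h (div_ne_zero two_ne_zero (ne_of_gt (hpos0 hα)))
      · exact h
    · intro h; rw [h, mul_zero]
  have horbp : ∀ (k : ℕ) {α : V}, α ∈ (Φp : Set V) → (fun v => σ v)^[k] α ∈ (Φp : Set V) := by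
    intro k α hα
    exact iter_mem σ (fun β hβ => hσp β hβ) k hα
  -- the σ-invariant positive functional
  set sL : V →ₗ[ℝ] V := (σ.toLinearEquiv : V →ₗ[ℝ] V) with hsL
  set ℓ' : V →ₗ[ℝ] ℝ := ∑ j ∈ Finset.range r, ℓ ∘ₗ (sL ^ j) with hℓ'
  have hℓ'apply : ∀ v : V, ℓ' v = ∑ j ∈ Finset.range r, ℓ ((fun v => σ v)^[j] v) := by
    intro v
    rw [hℓ', LinearMap.sum_apply]
    refine Finset.sum_congr rfl fun j _ => ?_
    rw [LinearMap.comp_apply, Module.End.pow_apply]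
    rfl
  have hℓ'pos : ∀ {γ : V}, γ ∈ (Φp : Set V) → 0 < ℓ' γ := by
    intro γ hγ
    rw [hℓ'apply]
    exact Finset.sum_pos (fun j _ => hℓ _ (horbp j hγ)) (by simpa using hr0.ne')
  have hℓ'σ : ∀ v : V, ℓ' (σ v) = ℓ' v := by
    intro v
    rw [hℓ'apply, hℓ'apply]
    have h1 : ∑ j ∈ Finset.range r, ℓ ((fun v => σ v)^[j] (σ v))
        = ∑ j ∈ Finset.range r, ℓ ((fun v => σ v)^[j + 1] v) :=
      Finset.sum_congr rfl fun j _ => by rw [Function.iterate_succ_apply]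
    have h2 := Finset.sum_range_succ' (fun j => ℓ ((fun v => σ v)^[j] v)) r
    have h3 := Finset.sum_range_succ (fun j => ℓ ((fun v => σ v)^[j] v)) r
    have h4 : ℓ ((fun v => σ v)^[r] v) = ℓ ((fun v => σ v)^[0] v) := by rw [hrid v]; simp
    rw [h1]
    simp only [Function.iterate_zero_apply] at h2 h3 h4 ⊢
    linarith
  have hℓ'iter : ∀ (k : ℕ) (v : V), ℓ' ((fun v => σ v)^[k] v) = ℓ' v := by
    intro k v
    induction k with
    | zero => simp
    | succ n ih => rw [Function.iterate_succ_apply', hℓ'σ, ih]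
  -- each folded firing step decomposes into Φ-firing steps
  have hfold_step : ∀ ν μ' : V, σ ν = ν →
      fire {β | IsFoldedPosRoot σ (Φp : Set V) β} ν μ' →
      Relation.ReflTransGen (fire (Φp : Set V)) ν μ' ∧ σ μ' = μ' := by
    rintro ν μ' hν ⟨β, hβS, hβ0, rfl⟩
    obtain ⟨B, hBp, hBne, hBσ, hBtrans, hBorth, rfl⟩ := hβS
    have hBΦ : ∀ {γ : V}, γ ∈ B → γ ∈ (Φ : Set V) := fun hγ => hsub (hBp hγ)
    have hdiag : ⟪∑ γ ∈ B, γ, ∑ γ ∈ B, γ⟫ = ∑ γ ∈ B, ⟪γ, γ⟫ := by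
      rw [sum_inner]
      refine Finset.sum_congr rfl fun γ hγ => ?_
      rw [inner_sum]
      exact Finset.sum_eq_single_of_mem γ hγ fun δ hδ hne => hBorth γ hγ δ hδ (Ne.symm hne)
    have hββpos : 0 < ⟪∑ γ ∈ B, γ, ∑ γ ∈ B, γ⟫ := by
      rw [hdiag]
      exact Finset.sum_pos (fun γ hγ => hpos0 (hBΦ hγ)) hBne
    obtain ⟨γ₀, hγ₀⟩ := hBne
    have hconst : ∀ γ ∈ B, ⟪ν, γ⟫ = ⟪ν, γ₀⟫ := by
      intro γ hγ
      obtain ⟨k, hk⟩ := hBtrans γ₀ hγ₀ γ hγ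
      have h1 := iter_inner σ k ν γ₀
      rw [iter_fix σ hν k, hk] at h1
      exact h1
    have hsum0 : ⟪ν, ∑ γ ∈ B, γ⟫ = 0 := by
      rw [inner_coroot_eq] at hβ0
      rcases mul_eq_zero.mp hβ0 with h | h
      · exact absurd h (div_ne_zero two_ne_zero (ne_of_gt hββpos))
      · exact h
    have hγ₀0 : ⟪ν, γ₀⟫ = 0 := by
      rw [inner_sum, Finset.sum_congr rfl hconst, Finset.sum_const, nsmul_eq_mul] at hsum0
      have hc : (0 : ℝ) < (B.card : ℝ) := by
        exact_mod_cast Finset.card_pos.mpr ⟨γ₀, hγ₀⟩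
      rcases mul_eq_zero.mp hsum0 with h | h
      · exact absurd h (ne_of_gt hc)
      · exact h
    have hz : ∀ γ ∈ B, ⟪ν, γ⟫ = 0 := fun γ hγ => (hconst γ hγ).trans hγ₀0
    constructor
    · -- firing chain
      have hchain : ∀ C : Finset V, C ⊆ B →
          Relation.ReflTransGen (fire (Φp : Set V)) ν (ν + ∑ γ ∈ C, γ) := by
        intro C
        induction C using Finset.induction_on with
        | empty => intro _; simpa using Relation.ReflTransGen.refl
        | @insert a C ha ih =>
          intro hins
          have hCB : C ⊆ B := (Finset.subset_insert a C).trans hins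
          have haB : a ∈ B := hins (Finset.mem_insert_self a C)
          refine (ih hCB).tail ⟨a, hBp haB, ?_, by rw [Finset.sum_insert ha]; abel⟩
          rw [hco0 (hBΦ haB), inner_add_left, hz a haB, sum_inner, zero_add]
          refine Finset.sum_eq_zero fun γ hγ => ?_
          exact hBorth γ (hCB hγ) a haB (fun he => ha (he ▸ hγ))
      simpa using hchain B Finset.Subset.rfl
    · -- σ-invariance of the new weight
      have himg : B.image (fun γ => σ γ) = B := by
        refine (Finset.eq_of_subset_of_card_le ?_ ?_).symm.symm
        · intro x hx
          obtain ⟨γ, hγ, rfl⟩ := Finset.mem_image.mp hx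
          exact hBσ γ hγ
        · rw [Finset.card_image_of_injective _ σ.injective]
      have hσsum : σ (∑ γ ∈ B, γ) = ∑ γ ∈ B, γ := by
        rw [map_sum]
        calc ∑ γ ∈ B, σ γ = ∑ γ ∈ B.image (fun γ => σ γ), γ := by
              rw [Finset.sum_image (fun x _ y _ h => σ.injective h)]
          _ = ∑ γ ∈ B, γ := by rw [himg]
      rw [map_add, hν, hσsum]
  -- reachability transfer
  have hreach : ∀ μ : V,
      Relation.ReflTransGen (fire {β | IsFoldedPosRoot σ (Φp : Set V) β}) lam μ →
      Relation.ReflTransGen (fire (Φp : Set V)) lam μ ∧ σ μ = μ := by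
    intro μ h
    induction h with
    | refl => exact ⟨Relation.ReflTransGen.refl, hσlam⟩
    | tail hab hbc ih =>
      obtain ⟨ih1, ih2⟩ := ih
      obtain ⟨h1, h2⟩ := hfold_step _ _ ih2 hbc
      exact ⟨ih1.trans h1, h2⟩
  -- terminality transfer
  have hterm : ∀ μ : V, σ μ = μ →
      (¬ ∃ ν, fire {β | IsFoldedPosRoot σ (Φp : Set V) β} μ ν) →
      ¬ ∃ ν, fire (Φp : Set V) μ ν := by
    rintro μ hμ hnf ⟨ν, α, hαp, hα0, rfl⟩
    set T : Finset V := Φp.filter (fun δ => ⟪μ, δ⟫ = 0) with hT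
    have hTmem : ∀ {δ : V}, δ ∈ T ↔ δ ∈ (Φp : Set V) ∧ ⟪μ, δ⟫ = 0 := by
      intro δ; simp [hT]
    have hαT : α ∈ T := hTmem.mpr ⟨hαp, (hco0 (hsub hαp) μ).mp hα0⟩
    obtain ⟨δ, hδT, hδmax⟩ := T.exists_max_image (fun x => ℓ' x) ⟨α, hαT⟩
    have hδp : δ ∈ (Φp : Set V) := (hTmem.mp hδT).1
    have hδ0 : ⟪μ, δ⟫ = 0 := (hTmem.mp hδT).2
    have hδΦ : δ ∈ (Φ : Set V) := hsub hδp
    have horbT : ∀ k : ℕ, (fun v => σ v)^[k] δ ∈ T := by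
      intro k
      refine hTmem.mpr ⟨horbp k hδp, ?_⟩
      have h1 := iter_inner σ k μ δ
      rw [iter_fix σ hμ k] at h1
      exact h1.trans hδ0
    -- key orthogonality of the orbit of δ
    have hkey : ∀ k : ℕ, (fun v => σ v)^[k] δ ≠ δ → ⟪δ, (fun v => σ v)^[k] δ⟫ = 0 := by
      intro k hne
      by_contra hnz
      set ε : V := (fun v => σ v)^[k] δ with hε
      have hεp : ε ∈ (Φp : Set V) := horbp k hδp
      have hεΦ : ε ∈ (Φ : Set V) := hsub hεp
      have hN : 0 < ⟪δ, δ⟫ := hpos0 hδΦ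
      have hNε : ⟪ε, ε⟫ = ⟪δ, δ⟫ := iter_inner σ k δ δ
      obtain ⟨n, hn⟩ := hΦcrys δ hδΦ ε hεΦ
      rw [inner_coroot_eq] at hn
      have hεδ : ⟪ε, δ⟫ = ⟪δ, ε⟫ := real_inner_comm δ ε
      have h2t : 2 * ⟪δ, ε⟫ = (n : ℝ) * ⟪δ, δ⟫ := by
        rw [div_mul_eq_mul_div, div_eq_iff (ne_of_gt hN)] at hn
        linarith [hεδ]
      have hsubnn := real_inner_self_nonneg (x := δ - ε)
      have haddnn := real_inner_self_nonneg (x := δ + ε)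
      rw [real_inner_sub_sub_self] at hsubnn
      rw [real_inner_add_add_self] at haddnn
      have hle : (n : ℝ) ≤ 2 := by nlinarith
      have hge : (-2 : ℝ) ≤ (n : ℝ) := by nlinarith
      have hle' : n ≤ 2 := by exact_mod_cast hle
      have hge' : (-2 : ℤ) ≤ n := by exact_mod_cast hge
      have hℓε : ℓ' ε = ℓ' δ := hℓ'iter k δ
      interval_cases n
      · -- n = -2 : ε = -δ
        have : ⟪ε + δ, ε + δ⟫ = 0 := by
          rw [real_inner_add_add_self]
          push_cast at h2t
          linarith [hNε]
        have hεδ' : ε = -δ := eq_neg_of_add_eq_zero_left (inner_self_eq_zero.mp this)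
        exact (hpm δ hδΦ).2 ⟨hδp, by rwa [← hεδ']⟩
      · -- n = -1 : η = ε + δ ∈ Φ⁺ ∩ T, taller than δ
        have hη : ε + δ ∈ (Φ : Set V) := by
          have h := hΦrefl δ hδΦ ε hεΦ
          rw [inner_coroot_eq, hεδ] at h
          have he : 2 / ⟪δ, δ⟫ * ⟪δ, ε⟫ = -1 := by
            rw [div_mul_eq_mul_div, div_eq_iff (ne_of_gt hN)]
            push_cast at h2t
            linarith
          rw [he] at h
          simpa using h
        have hηp : ε + δ ∈ (Φp : Set V) := by
          rcases (hpm _ hη).1 with h | h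
          · exact h
          · exfalso
            have := hℓ'pos h
            rw [map_neg, map_add, hℓε] at this
            have := hℓ'pos hδp
            linarith
        have hηT : ε + δ ∈ T := by
          refine hTmem.mpr ⟨hηp, ?_⟩
          rw [inner_add_right, hδ0, (hTmem.mp (horbT k)).2, add_zero]
        have := hδmax _ hηT
        rw [map_add, hℓε] at this
        have := hℓ'pos hδp
        linarith
      · -- n = 0
        push_cast at h2t
        exact hnz (by linarith)
      · -- n = 1 : η = ε - δ ∈ Φ has ℓ' = 0
        have hη : ε - δ ∈ (Φ : Set V) := by
          have h := hΦrefl δ hδΦ ε hεΦ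
          rw [inner_coroot_eq, hεδ] at h
          have he : 2 / ⟪δ, δ⟫ * ⟪δ, ε⟫ = 1 := by
            rw [div_mul_eq_mul_div, div_eq_iff (ne_of_gt hN)]
            push_cast at h2t
            linarith
          rw [he] at h
          simpa using h
        have hℓη : ℓ' (ε - δ) = 0 := by
          rw [map_sub, hℓε, sub_self]
        rcases (hpm _ hη).1 with h | h
        · have := hℓ'pos h; linarith
        · have := hℓ'pos h
          rw [map_neg, hℓη] at this
          linarith
      · -- n = 2 : ε = δ
        have : ⟪δ - ε, δ - ε⟫ = 0 := by
          rw [real_inner_sub_sub_self]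
          push_cast at h2t
          linarith [hNε]
        exact hne (sub_eq_zero.mp (inner_self_eq_zero.mp this)).symm
    -- build the folded root
    apply hnf
    set B : Finset V := (Finset.range r).image (fun j => (fun v => σ v)^[j] δ) with hB
    have hBmem : ∀ {γ : V}, γ ∈ B ↔ ∃ j, j < r ∧ (fun v => σ v)^[j] δ = γ := by
      intro γ; simp [hB]
    have hiterB : ∀ m : ℕ, (fun v => σ v)^[m] δ ∈ B := by
      intro m
      induction m using Nat.strong_induction_on with
      | _ m ih =>
        rcases lt_or_ge m r with h | h
        · exact hBmem.mpr ⟨m, h, rfl⟩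
        · have hm : (fun v => σ v)^[m] δ = (fun v => σ v)^[m - r] δ := by
            conv_lhs => rw [← Nat.sub_add_cancel h]
            rw [Function.iterate_add_apply, hrid δ]
          rw [hm]
          exact ih (m - r) (by omega)
    refine ⟨μ + ∑ γ ∈ B, γ, ∑ γ ∈ B, γ, ⟨B, ?_, ⟨δ, hBmem.mpr ⟨0, hr0, rfl⟩⟩, ?_, ?_, ?_, rfl⟩, ?_, rfl⟩
    · -- B ⊆ Φp
      intro x hx
      obtain ⟨j, _, rfl⟩ := hBmem.mp hx
      exact horbp j hδp
    · -- σ-stable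
      intro γ hγ
      obtain ⟨j, _, rfl⟩ := hBmem.mp hγ
      have : σ ((fun v => σ v)^[j] δ) = (fun v => σ v)^[j + 1] δ :=
        (Function.iterate_succ_apply' (fun v => σ v) j δ).symm
      rw [this]
      exact hiterB (j + 1)
    · -- transitive
      intro γ hγ δ'' hδ''
      obtain ⟨i, hi, rfl⟩ := hBmem.mp hγ
      obtain ⟨j, hj, rfl⟩ := hBmem.mp hδ''
      refine ⟨j + (r - i), ?_⟩
      rw [← Function.iterate_add_apply]
      have hji : j + (r - i) + i = j + r := by omega
      rw [hji, Function.iterate_add_apply, hrid δ]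
    · -- pairwise orthogonal
      have main : ∀ i j : ℕ, i ≤ j →
          (fun v => σ v)^[i] δ ≠ (fun v => σ v)^[j] δ →
          ⟪(fun v => σ v)^[i] δ, (fun v => σ v)^[j] δ⟫ = 0 := by
        intro i j hij hne
        have hdecomp : (fun v => σ v)^[j] δ
            = (fun v => σ v)^[i] ((fun v => σ v)^[j - i] δ) := by
          rw [← Function.iterate_add_apply]
          congr 1
          omega
        rw [hdecomp, iter_inner]
        refine hkey (j - i) fun he => hne ?_
        rw [hdecomp, he]
      intro γ hγ δ'' hδ'' hne
      obtain ⟨i, _, rfl⟩ := hBmem.mp hγ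
      obtain ⟨j, _, rfl⟩ := hBmem.mp hδ''
      rcases le_total i j with h | h
      · exact main i j h hne
      · rw [real_inner_comm]
        exact main j i h (Ne.symm hne)
    · -- ⟪μ, coroot β⟫ = 0
      have hzz : ∀ γ ∈ B, ⟪μ, γ⟫ = 0 := by
        intro γ hγ
        obtain ⟨j, _, rfl⟩ := hBmem.mp hγ
        exact (hTmem.mp (horbT j)).2
      have hz2 : ⟪μ, ∑ γ ∈ B, γ⟫ = 0 := by
        rw [inner_sum]
        exact Finset.sum_eq_zero hzz
      rw [inner_coroot_eq, hz2, mul_zero]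
  -- conclude
  intro μ₁ μ₂ h1 t1 h2 t2
  obtain ⟨r1, s1⟩ := hreach μ₁ h1
  obtain ⟨r2, s2⟩ := hreach μ₂ h2
  exact hconf μ₁ μ₂ r1 (hterm μ₁ s1 t1) r2 (hterm μ₂ s2 t2)

end CF
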